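/- For every integer m ≥ 3 one has q_{m−1} > q_m, and the tip k_m := (2m+1)·log 3 / (q_{m−1} − q_m) of the m-th wedge satisfies (1/2)·log 3 · m^2 · (log m)^2 < k_m < 6·log 3 · m^2 · (log m)^2. -/

import Mathlib

open Real Set

/-- `2x log x ≤ x² - 1` for `x ≥ 1`. -/
lemma key_upper {x : ℝ} (hx : 1 ≤ x) : 2 * x * Real.log x ≤ x ^ 2 - 1 := by
  have hmono : MonotoneOn (fun t : ℝ => t ^ 2 - 1 - 2 * t * Real.log t) (Set.Ici 1) := by
    have hd : ∀ t : ℝ, t ∈ interior (Set.Ici (1:ℝ)) →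
        HasDerivAt (fun t : ℝ => t ^ 2 - 1 - 2 * t * Real.log t)
          (2 * t - (2 * Real.log t + 2 * t * t⁻¹)) t := by
      intro t ht
      rw [interior_Ici] at ht
      have ht0 : t ≠ 0 := by have : (1:ℝ) < t := ht; positivity
      have h1 : HasDerivAt (fun t : ℝ => t ^ 2 - 1) (2 * t) t := by
        simpa using ((hasDerivAt_pow 2 t).sub_const 1)
      have h2 : HasDerivAt (fun t : ℝ => 2 * t * Real.log t)
          (2 * Real.log t + 2 * t * t⁻¹) t := by
        have := ((hasDerivAt_id t).const_mul 2).mul (Real.hasDerivAt_log ht0)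
        exact this.congr_deriv (by simp only [id]; ring)
      exact h1.sub h2
    apply monotoneOn_of_deriv_nonneg (convex_Ici 1)
    · apply ContinuousOn.sub (by fun_prop)
      apply ContinuousOn.mul (by fun_prop)
      apply Real.continuousOn_log.mono
      intro t ht
      simp only [Set.mem_compl_iff, Set.mem_singleton_iff]
      have : (1:ℝ) ≤ t := ht
      positivity
    · intro t ht
      exact (hd t ht).differentiableAt.differentiableWithinAt
    · intro t ht
      rw [(hd t ht).deriv]
      rw [interior_Ici] at ht
      have ht0 : (0:ℝ) < t := lt_trans one_pos ht
      have hlog : Real.log t ≤ t - 1 := Real.log_le_sub_one_of_pos ht0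
      have : 2 * t * t⁻¹ = 2 := by field_simp
      rw [this]
      nlinarith
  have := hmono (self_mem_Ici) (mem_Ici.mpr hx) hx
  simp at this
  nlinarith

/-- `2(x-1) ≤ (x+1) log x` for `x ≥ 1`. -/
lemma key_lower {x : ℝ} (hx : 1 ≤ x) : 2 * (x - 1) ≤ (x + 1) * Real.log x := by
  have hmono : MonotoneOn (fun t : ℝ => (t + 1) * Real.log t - 2 * (t - 1)) (Set.Ici 1) := by
    have hd : ∀ t : ℝ, t ∈ interior (Set.Ici (1:ℝ)) →
        HasDerivAt (fun t : ℝ => (t + 1) * Real.log t - 2 * (t - 1))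
          ((Real.log t + (t + 1) * t⁻¹) - 2) t := by
      intro t ht
      rw [interior_Ici] at ht
      have ht0 : t ≠ 0 := by have : (1:ℝ) < t := ht; positivity
      have h2 : HasDerivAt (fun t : ℝ => (t + 1) * Real.log t)
          (Real.log t + (t + 1) * t⁻¹) t := by
        have := ((hasDerivAt_id t).add_const 1).mul (Real.hasDerivAt_log ht0)
        exact this.congr_deriv (by simp only [id]; ring)
      exact (h2.sub (((hasDerivAt_id t).sub_const 1).const_mul 2)).congr_deriv (by ring)
    apply monotoneOn_of_deriv_nonneg (convex_Ici 1)
    · apply ContinuousOn.sub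
      · apply ContinuousOn.mul (by fun_prop)
        apply Real.continuousOn_log.mono
        intro t ht
        simp only [Set.mem_compl_iff, Set.mem_singleton_iff]
        have : (1:ℝ) ≤ t := ht
        positivity
      · fun_prop
    · intro t ht
      exact (hd t ht).differentiableAt.differentiableWithinAt
    · intro t ht
      rw [(hd t ht).deriv]
      rw [interior_Ici] at ht
      have ht0 : (0:ℝ) < t := lt_trans one_pos ht
      have hlog : 1 - t⁻¹ ≤ Real.log t := Real.one_sub_inv_le_log_of_pos ht0
      have h1 : (t + 1) * t⁻¹ = 1 + t⁻¹ := by field_simp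
      rw [h1]
      have h2 : (0:ℝ) < t⁻¹ := by positivity
      nlinarith
  have := hmono (self_mem_Ici) (mem_Ici.mpr hx) hx
  simp at this
  nlinarith

/-- `q M = log(log M / log(M+1)) / log(M/(M+1))`, the slope of the `M`-th critical line. -/
noncomputable def q (M : ℕ) : ℝ :=
  Real.log (Real.log M / Real.log ((M : ℝ) + 1)) / Real.log ((M : ℝ) / ((M : ℝ) + 1))


lemma q_bounds (M : ℕ) (hM : 2 ≤ M) :
    2 / (Real.log (M:ℝ) + Real.log ((M:ℝ) + 1)) ≤ q M ∧
    q M ≤ (Real.log (M:ℝ) + Real.log ((M:ℝ) + 1)) /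
      (2 * Real.log (M:ℝ) * Real.log ((M:ℝ) + 1)) := by
  have hM1 : (1:ℝ) < (M:ℝ) := by exact_mod_cast (by omega : 1 < M)
  set a := Real.log (M:ℝ) with hadef
  set b := Real.log ((M:ℝ) + 1) with hbdef
  have ha : 0 < a := Real.log_pos hM1
  have hab : a < b := Real.log_lt_log (by linarith) (by linarith)
  have hb : 0 < b := ha.trans hab
  have hba : 0 < b - a := by linarith
  have hq : q M = Real.log (b / a) / (b - a) := by
    unfold q
    rw [← hadef, ← hbdef, Real.log_div ha.ne' hb.ne',
      Real.log_div (by positivity : (M:ℝ) ≠ 0) (by positivity : (M:ℝ) + 1 ≠ 0),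
      Real.log_div hb.ne' ha.ne', ← hadef, ← hbdef,
      ← neg_sub (Real.log b) (Real.log a), ← neg_sub b a, neg_div_neg_eq]
  have hx : (1:ℝ) ≤ b / a := (one_le_div ha).mpr hab.le
  constructor
  · have key := key_lower hx
    have e1 : 2 * ((b/a) - 1) * a = 2 * (b - a) := by field_simp
    have e2 : ((b/a) + 1) * Real.log (b/a) * a = Real.log (b/a) * (a + b) := by
      field_simp; ring
    have h3 := mul_le_mul_of_nonneg_right key ha.le
    rw [hq, div_le_div_iff₀ (by positivity) hba]
    nlinarith [h3, e1, e2]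
  · have key := key_upper hx
    have e1 : 2 * (b/a) * Real.log (b/a) * a ^ 2 = Real.log (b/a) * (2 * a * b) := by
      field_simp
    have e2 : ((b/a) ^ 2 - 1) * a ^ 2 = b ^ 2 - a ^ 2 := by field_simp
    have h3 := mul_le_mul_of_nonneg_right key (sq_nonneg a)
    rw [hq, div_le_div_iff₀ hba (by positivity)]
    nlinarith [h3, e1, e2]

set_option maxHeartbeats 1000000 in
/-- For every `m ≥ 3` one has `q (m-1) > q m`, and the tip
`k_m = (2m+1) log 3 / (q (m-1) - q m)` of the `m`-th wedge satisfies
`(1/2) log 3 · m² (log m)² < k_m < 6 log 3 · m² (log m)²`. -/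
theorem wedge_tip_bounds (m : ℕ) (hm : 3 ≤ m) :
    q m < q (m - 1) ∧
    (1 / 2) * Real.log 3 * (m : ℝ) ^ 2 * (Real.log m) ^ 2 <
      (2 * (m : ℝ) + 1) * Real.log 3 / (q (m - 1) - q m) ∧
    (2 * (m : ℝ) + 1) * Real.log 3 / (q (m - 1) - q m) <
      6 * Real.log 3 * (m : ℝ) ^ 2 * (Real.log m) ^ 2 := by
  have hm3 : (3:ℝ) ≤ (m:ℝ) := by exact_mod_cast hm
  have hm1pos : (0:ℝ) < (m:ℝ) - 1 := by linarith
  have hm1ne : ((m:ℝ) - 1) ≠ 0 := ne_of_gt hm1pos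
  have hmne : (m:ℝ) ≠ 0 := by positivity
  have hcast : ((m - 1 : ℕ) : ℝ) = (m : ℝ) - 1 := by
    have := Nat.cast_sub (by omega : 1 ≤ m) (R := ℝ); simpa using this
  obtain ⟨h1l, h1u⟩ := q_bounds (m - 1) (by omega)
  obtain ⟨h2l, h2u⟩ := q_bounds m (by omega)
  rw [hcast, sub_add_cancel] at h1l h1u
  set a := Real.log ((m:ℝ) - 1) with hadef
  set b := Real.log (m:ℝ) with hbdef
  set c := Real.log ((m:ℝ) + 1) with hcdef
  have ha : 0 < a := Real.log_pos (by linarith)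
  have hab : a < b := Real.log_lt_log (by linarith) (by linarith)
  have hbc : b < c := Real.log_lt_log (by linarith) (by linarith)
  have hb : 0 < b := ha.trans hab
  have hc : 0 < c := hb.trans hbc
  have hac : 0 < c - a := by linarith
  -- b ≤ 2a
  have h2a : b ≤ 2 * a := by
    have h1 : (m:ℝ) ≤ ((m:ℝ) - 1) ^ 2 := by nlinarith
    have h2 : Real.log (m:ℝ) ≤ Real.log (((m:ℝ) - 1) ^ 2) :=
      Real.log_le_log (by linarith) h1
    rwa [Real.log_pow, Nat.cast_ofNat] at h2
  -- 3c ≤ 4b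
  have h3c : 3 * c ≤ 4 * b := by
    have h1 : ((m:ℝ) + 1) ^ 3 ≤ (m:ℝ) ^ 4 := by
      nlinarith [mul_le_mul_of_nonneg_left hm3 (by positivity : (0:ℝ) ≤ (m:ℝ)^3),
        mul_le_mul_of_nonneg_left hm3 (by positivity : (0:ℝ) ≤ (m:ℝ)^2), hm3,
        mul_le_mul_of_nonneg_left hm3 (by positivity : (0:ℝ) ≤ (m:ℝ))]
    have h2 : Real.log (((m:ℝ) + 1) ^ 3) ≤ Real.log ((m:ℝ) ^ 4) :=
      Real.log_le_log (by positivity) h1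
    rw [Real.log_pow, Real.log_pow] at h2
    push_cast at h2
    linarith
  -- c - a = log((m+1)/(m-1))
  have hX : Real.log (((m:ℝ) + 1) / ((m:ℝ) - 1)) = c - a := by
    rw [Real.log_div (by positivity) hm1ne]
  -- c - a ≤ 2/(m-1)
  have hca_ub : c - a ≤ 2 / ((m:ℝ) - 1) := by
    have h1 := Real.log_le_sub_one_of_pos
      (show (0:ℝ) < ((m:ℝ) + 1) / ((m:ℝ) - 1) from div_pos (by linarith) hm1pos)
    rw [hX] at h1
    have h2 : ((m:ℝ) + 1) / ((m:ℝ) - 1) - 1 = 2 / ((m:ℝ) - 1) := by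
      field_simp
      norm_num
    linarith
  -- 2/m ≤ c - a
  have hca_lb : 2 / (m:ℝ) ≤ c - a := by
    have hx1 : (1:ℝ) ≤ ((m:ℝ) + 1) / ((m:ℝ) - 1) := by
      rw [le_div_iff₀ hm1pos]; linarith
    have key := key_lower hx1
    rw [hX] at key
    have h3 := mul_le_mul_of_nonneg_right key (le_of_lt hm1pos)
    have e1 : 2 * (((m:ℝ) + 1) / ((m:ℝ) - 1) - 1) * ((m:ℝ) - 1) = 4 := by
      field_simp
      norm_num
    have e2 : (((m:ℝ) + 1) / ((m:ℝ) - 1) + 1) * (c - a) * ((m:ℝ) - 1)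
        = 2 * (m:ℝ) * (c - a) := by
      field_simp
      ring
    rw [div_le_iff₀ (by linarith : (0:ℝ) < (m:ℝ))]
    nlinarith [h3, e1, e2]
  clear_value a b c
  clear hadef hbdef hcdef hX
  have pab : (0:ℝ) < a + b := by linarith
  have pbc : (0:ℝ) < b + c := by linarith
  have p2ab : (0:ℝ) < 2 * a * b := by
    have := mul_pos ha hb; linarith
  have p2bc : (0:ℝ) < 2 * b * c := by
    have := mul_pos hb hc; linarith
  -- Δ bounds
  have key1 : (c - a) / (2 * b * c) ≤ 2 / (a + b) - (b + c) / (2 * b * c) := by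
    rw [le_sub_iff_add_le, ← add_div, div_le_div_iff₀ p2bc pab]
    nlinarith [mul_nonneg (sub_nonneg.mpr hab.le) (by linarith : (0:ℝ) ≤ 2 * c - a - b)]
  have key2 : (a + b) / (2 * a * b) - 2 / (b + c) ≤ (c - a) / (2 * a * b) := by
    have h1 : (a + b - (c - a)) / (2 * a * b) ≤ 2 / (b + c) := by
      rw [div_le_div_iff₀ p2ab pbc]
      nlinarith [mul_nonneg (sub_nonneg.mpr hbc.le) (by linarith : (0:ℝ) ≤ b + c - 2 * a)]
    have h2 : (a + b - (c - a)) / (2 * a * b) = (a + b) / (2 * a * b) - (c - a) / (2 * a * b) :=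
      sub_div _ _ _
    linarith
  have hΔ1 : (c - a) / (2 * b * c) ≤ q (m - 1) - q m := by linarith
  have hΔ2 : q (m - 1) - q m ≤ (c - a) / (2 * a * b) := by linarith
  have hΔpos : 0 < q (m - 1) - q m := lt_of_lt_of_le (div_pos hac p2bc) hΔ1
  have hL : 0 < Real.log 3 := Real.log_pos (by norm_num)
  refine ⟨by linarith, ?_, ?_⟩
  · -- lower bound for k
    have hDpos : (0:ℝ) < ((m:ℝ) - 1) * a * b := mul_pos (mul_pos hm1pos ha) hb
    have hΔub : q (m - 1) - q m ≤ 1 / (((m:ℝ) - 1) * a * b) := by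
      have h1 : (c - a) / (2 * a * b) ≤ (2 / ((m:ℝ) - 1)) / (2 * a * b) :=
        (div_le_div_iff_of_pos_right p2ab).mpr hca_ub
      have e : (2 / ((m:ℝ) - 1)) / (2 * a * b) = 1 / (((m:ℝ) - 1) * a * b) := by
        rw [div_div]
        rw [div_eq_div_iff (ne_of_gt (by nlinarith : (0:ℝ) < ((m:ℝ) - 1) * (2 * a * b)))
          (ne_of_gt hDpos)]
        ring
      linarith
    have hstep : (2 * (m:ℝ) + 1) * Real.log 3 * (((m:ℝ) - 1) * a * b) ≤
        (2 * (m:ℝ) + 1) * Real.log 3 / (q (m - 1) - q m) := by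
      rw [le_div_iff₀ hΔpos]
      have hCpos : (0:ℝ) ≤ (2 * (m:ℝ) + 1) * Real.log 3 * (((m:ℝ) - 1) * a * b) :=
        le_of_lt (mul_pos (mul_pos (by linarith) hL) hDpos)
      have h4 := mul_le_mul_of_nonneg_left hΔub hCpos
      have e : (2 * (m:ℝ) + 1) * Real.log 3 * (((m:ℝ) - 1) * a * b) *
          (1 / (((m:ℝ) - 1) * a * b)) = (2 * (m:ℝ) + 1) * Real.log 3 := by
        rw [mul_one_div, mul_div_assoc, div_self (ne_of_gt hDpos), mul_one]
      linarith
    have hfin : (1 / 2) * Real.log 3 * (m:ℝ) ^ 2 * b ^ 2 <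
        (2 * (m:ℝ) + 1) * Real.log 3 * (((m:ℝ) - 1) * a * b) := by
      have h5 : (m:ℝ) ^ 2 + 1 ≤ (2 * (m:ℝ) + 1) * ((m:ℝ) - 1) := by nlinarith
      nlinarith [mul_pos hL (mul_pos hb hb), mul_pos ha hb, mul_pos hL hb,
        mul_le_mul_of_nonneg_left h2a (le_of_lt (mul_pos hL hb)),
        mul_pos (mul_pos hL hb) hb]
    linarith
  · -- upper bound for k
    have hDpos : (0:ℝ) < (m:ℝ) * b * c := mul_pos (mul_pos (by linarith) hb) hc
    have hΔlb : 1 / ((m:ℝ) * b * c) ≤ q (m - 1) - q m := by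
      have h1 : (2 / (m:ℝ)) / (2 * b * c) ≤ (c - a) / (2 * b * c) :=
        (div_le_div_iff_of_pos_right p2bc).mpr hca_lb
      have e : (2 / (m:ℝ)) / (2 * b * c) = 1 / ((m:ℝ) * b * c) := by
        rw [div_div]
        rw [div_eq_div_iff (ne_of_gt (by nlinarith : (0:ℝ) < (m:ℝ) * (2 * b * c)))
          (ne_of_gt hDpos)]
        ring
      linarith
    have hstep : (2 * (m:ℝ) + 1) * Real.log 3 / (q (m - 1) - q m) ≤
        (2 * (m:ℝ) + 1) * Real.log 3 * ((m:ℝ) * b * c) := by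
      rw [div_le_iff₀ hΔpos]
      have hCpos : (0:ℝ) ≤ (2 * (m:ℝ) + 1) * Real.log 3 * ((m:ℝ) * b * c) :=
        le_of_lt (mul_pos (mul_pos (by linarith) hL) hDpos)
      have h4 := mul_le_mul_of_nonneg_left hΔlb hCpos
      have e : (2 * (m:ℝ) + 1) * Real.log 3 * ((m:ℝ) * b * c) *
          (1 / ((m:ℝ) * b * c)) = (2 * (m:ℝ) + 1) * Real.log 3 := by
        rw [mul_one_div, mul_div_assoc, div_self (ne_of_gt hDpos), mul_one]
      linarith
    have hfin : (2 * (m:ℝ) + 1) * Real.log 3 * ((m:ℝ) * b * c) <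
        6 * Real.log 3 * (m:ℝ) ^ 2 * b ^ 2 := by
      have h1 : (2 * (m:ℝ) + 1) * Real.log 3 * ((m:ℝ) * b * c) * 3
          = ((2 * (m:ℝ) + 1) * (m:ℝ)) * (Real.log 3 * b) * (3 * c) := by ring
      have h2 : ((2 * (m:ℝ) + 1) * (m:ℝ)) * (Real.log 3 * b) * (3 * c)
          ≤ ((2 * (m:ℝ) + 1) * (m:ℝ)) * (Real.log 3 * b) * (4 * b) := by
        apply mul_le_mul_of_nonneg_left h3c
        have hmn : (0:ℝ) ≤ (2 * (m:ℝ) + 1) * (m:ℝ) := by positivity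
        exact mul_nonneg hmn (mul_nonneg hL.le hb.le)
      have h3 : ((2 * (m:ℝ) + 1) * (m:ℝ)) * (Real.log 3 * b) * (4 * b)
          < (6 * Real.log 3 * (m:ℝ) ^ 2 * b ^ 2) * 3 := by
        nlinarith [mul_pos hL (mul_pos hb hb), hm3,
          mul_pos (mul_pos hL (mul_pos hb hb)) (show (0:ℝ) < (m:ℝ) by linarith)]
      linarith
    linarith
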